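/- arXiv:2311.16148 — 2 statements merged into one kernel-verified Lean document; each statement's English description precedes it below -/
import Mathlib

section
/- Let c₁ ≠ c₂ be real numbers and σ₁, σ₂ > 0. Then the map h : ℝ → ℝ² defined by h(u) = (exp(-(u - c₁)²/(2σ₁²)), exp(-(u - c₂)²/(2σ₂²))) is injective. -/
theorem urbf_two_kernel_injective (c₁ c₂ σ₁ σ₂ : ℝ) (hc : c₁ ≠ c₂)
    (hσ₁ : 0 < σ₁) (hσ₂ : 0 < σ₂) :
    Function.Injective (fun u : ℝ =>
      (Real.exp (-(u - c₁) ^ 2 / (2 * σ₁ ^ 2)),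
       Real.exp (-(u - c₂) ^ 2 / (2 * σ₂ ^ 2)))) := by
  intro u v h
  simp only [Prod.mk.injEq] at h
  obtain ⟨h1, h2⟩ := h
  have e1 := Real.exp_injective h1
  have e2 := Real.exp_injective h2
  have s1 : σ₁ ^ 2 ≠ 0 := by positivity
  have s2 : σ₂ ^ 2 ≠ 0 := by positivity
  have q1 : (u - c₁) ^ 2 = (v - c₁) ^ 2 := by
    field_simp at e1; linarith
  have q2 : (u - c₂) ^ 2 = (v - c₂) ^ 2 := by
    field_simp at e2; linarith
  have d1 : u - c₁ = v - c₁ ∨ u - c₁ = -(v - c₁) := sq_eq_sq_iff_eq_or_eq_neg.mp q1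
  have d2 : u - c₂ = v - c₂ ∨ u - c₂ = -(v - c₂) := sq_eq_sq_iff_eq_or_eq_neg.mp q2
  rcases d1 with h | h <;> rcases d2 with h' | h' <;>
    first
    | linarith
    | (exfalso; apply hc; linarith)
end

section
/- Fix D ≥ 1 and, for each coordinate d, two kernels with distinct centers c_{d,1} ≠ c_{d,2} and spreads σ_{d,1}, σ_{d,2} > 0. Define H : ℝ^D → ℝ^{2D} by H(x)_{(d,k)} = exp(-(x_d - c_{d,k})²/(2σ_{d,k}²)). Then for any N distinct points x₁, …, x_N ∈ ℝ^D and any function values y₁, …, y_N ∈ ℝ, there exists a function f : ℝ^{2D} → ℝ of the form f(z) = ∑_{q=1}^N β_q ψ(A_q(z)) (with ψ achieving 0 and 1, A_q affine, β_q ∈ ℝ) such that f(H(xₙ)) = yₙ for all n — assuming the finite interpolation theorem for single-hidden-layer networks holds. -/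
theorem urbf_universal_interpolation (D : ℕ) (hD : 1 ≤ D)
    (c σ : Fin D → Fin 2 → ℝ)
    (hc : ∀ d, c d 0 ≠ c d 1) (hσ : ∀ d k, 0 < σ d k)
    (H : (Fin D → ℝ) → (Fin D × Fin 2 → ℝ))
    (hH : ∀ x dk, H x dk = Real.exp (-(x dk.1 - c dk.1 dk.2) ^ 2 / (2 * (σ dk.1 dk.2) ^ 2)))
    (N : ℕ)
    (hinterp : ∀ z : Fin N → (Fin D × Fin 2 → ℝ), Function.Injective z →
      ∀ y : Fin N → ℝ,
        ∃ (ψ : ℝ → ℝ) (a b : ℝ) (β : Fin N → ℝ)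
          (w : Fin N → (Fin D × Fin 2 → ℝ)) (bias : Fin N → ℝ),
          ψ a = 0 ∧ ψ b = 1 ∧
          ∀ n, ∑ q : Fin N, β q * ψ ((∑ j, w q j * z n j) + bias q) = y n)
    (x : Fin N → (Fin D → ℝ)) (hx : Function.Injective x) (y : Fin N → ℝ) :
    ∃ (ψ : ℝ → ℝ) (a b : ℝ) (β : Fin N → ℝ)
      (w : Fin N → (Fin D × Fin 2 → ℝ)) (bias : Fin N → ℝ),
      ψ a = 0 ∧ ψ b = 1 ∧
      ∀ n, ∑ q : Fin N, β q * ψ ((∑ j, w q j * H (x n) j) + bias q) = y n := by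
  have hHinj : Function.Injective H := by
    intro u v huv
    funext d
    have key : ∀ k : Fin 2, (u d - c d k) ^ 2 = (v d - c d k) ^ 2 := by
      intro k
      have h1 : H u (d, k) = H v (d, k) := by rw [huv]
      rw [hH, hH] at h1
      have h2 := Real.exp_injective h1
      have hσk := hσ d k
      have hσpos : (0:ℝ) < 2 * (σ d k) ^ 2 := by positivity
      have h3 := Real.exp_injective h1
      simp only [neg_div] at h3
      have h4 : (u d - c d k) ^ 2 / (2 * σ d k ^ 2) = (v d - c d k) ^ 2 / (2 * σ d k ^ 2) := by linarith
      field_simp at h4; linarith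
    have h0 := key 0
    have h1 := key 1
    have : (u d - v d) * (c d 0 - c d 1) = 0 := by nlinarith
    rcases mul_eq_zero.mp this with h | h
    · linarith
    · exact absurd (by linarith : c d 0 = c d 1) (hc d)
  exact hinterp (fun n => H (x n)) (fun n m h => hx (hHinj h)) y
end
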